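/- Let π be a valid function. If π is a weak facet, then π is a minimal valid function. -/

import Mathlib

/-- A finite-support function `y : ℝ → ℕ` is feasible if `∑ r, r·y(r) − f ∈ ℤ`. -/
def Feasible (f : ℝ) (y : ℝ →₀ ℕ) : Prop :=
  ∃ z : ℤ, (∑ r ∈ y.support, r * (y r : ℝ)) - f = (z : ℝ)

/-- `π` is a valid function: nonnegative, and `∑ r, π(r)·y(r) ≥ 1` for every feasible `y`. -/
def Valid (f : ℝ) (π : ℝ → ℝ) : Prop :=
  (∀ x, 0 ≤ π x) ∧
    ∀ y : ℝ →₀ ℕ, Feasible f y → 1 ≤ ∑ r ∈ y.support, π r * (y r : ℝ)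

/-- A valid function is minimal if no other valid function is pointwise ≤ it. -/
def MinimalValid (f : ℝ) (π : ℝ → ℝ) : Prop :=
  Valid f π ∧ ¬ ∃ π' : ℝ → ℝ, Valid f π' ∧ (∀ x, π' x ≤ π x) ∧ π' ≠ π

/-- `P(π)`: the set of feasible `y` with `∑ r, π(r)·y(r) = 1`. -/
def Pset (f : ℝ) (π : ℝ → ℝ) : Set (ℝ →₀ ℕ) :=
  {y | Feasible f y ∧ ∑ r ∈ y.support, π r * (y r : ℝ) = 1}

/-- `E(π) = {(x,y) : π(x) + π(y) = π(x+y)}`. -/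
def Eset (π : ℝ → ℝ) : Set (ℝ × ℝ) :=
  {p | π p.1 + π p.2 = π (p.1 + p.2)}

/-- A valid function `π` is a facet if every valid `π'` with `P(π) ⊆ P(π')` equals `π`. -/
def IsFacet (f : ℝ) (π : ℝ → ℝ) : Prop :=
  Valid f π ∧ ∀ π' : ℝ → ℝ, Valid f π' → Pset f π ⊆ Pset f π' → π' = π

/-- A valid function `π` is a weak facet if every valid `π'` with `P(π) ⊆ P(π')`
has `P(π) = P(π')`. -/
def IsWeakFacet (f : ℝ) (π : ℝ → ℝ) : Prop :=
  Valid f π ∧ ∀ π' : ℝ → ℝ, Valid f π' → Pset f π ⊆ Pset f π' → Pset f π = Pset f π'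

/-- A valid function `π` is extreme if whenever `π = (π¹ + π²)/2` with `π¹, π²` valid,
then `π¹ = π² = π`. -/
def ExtremeFunc (f : ℝ) (π : ℝ → ℝ) : Prop :=
  Valid f π ∧ ∀ π₁ π₂ : ℝ → ℝ, Valid f π₁ → Valid f π₂ →
    (∀ x, π x = (π₁ x + π₂ x) / 2) → π₁ = π ∧ π₂ = π

/-- `π` is piecewise linear: there is a closed, discrete set `B ⊆ ℝ` of breakpoints
such that `π` is affine on each connected component of `ℝ \ B`. -/
def PiecewiseLinear (π : ℝ → ℝ) : Prop :=
  ∃ B : Set ℝ, IsClosed B ∧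
    (∀ x ∈ B, ∃ ε > (0 : ℝ), ∀ y ∈ B, |y - x| < ε → y = x) ∧
    (∀ x ∉ B, ∃ a b : ℝ, ∀ z ∈ connectedComponentIn Bᶜ x, π z = a * z + b)

/-- `π` is continuous piecewise linear. -/
def ContPiecewiseLinear (π : ℝ → ℝ) : Prop :=
  PiecewiseLinear π ∧ Continuous π

namespace Stmt4Aux

/-- Weighted sum of `g` over a multiset. -/
noncomputable def Wm (g : ℝ → ℝ) (M : Multiset ℝ) : ℝ := (M.map g).sum

/-- Multiset version of feasibility. -/
def FeasM (f : ℝ) (M : Multiset ℝ) : Prop := ∃ z : ℤ, M.sum - f = (z : ℝ)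

/-- Multiset version of validity. -/
def ValidM (f : ℝ) (π : ℝ → ℝ) : Prop :=
  (∀ x, 0 ≤ π x) ∧ ∀ M : Multiset ℝ, FeasM f M → 1 ≤ Wm π M

lemma wm_toMultiset (g : ℝ → ℝ) (y : ℝ →₀ ℕ) :
    Wm g (Finsupp.toMultiset y) = ∑ r ∈ y.support, g r * (y r : ℝ) := by
  induction y using Finsupp.induction with
  | zero => simp [Wm]
  | single_add a n y ha hn ih =>
    have hdisj : Disjoint (Finsupp.single a n).support y.support := by
      rw [Finsupp.support_single_ne_zero a hn]
      simpa [Finset.disjoint_left] using ha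
    rw [Wm] at ih ⊢
    rw [Finsupp.toMultiset_add, Multiset.map_add, Multiset.sum_add, ih,
      Finsupp.toMultiset_single, Finsupp.support_add_eq hdisj, Finset.sum_union hdisj,
      Finsupp.support_single_ne_zero a hn, Finset.sum_singleton]
    have h1 : ∀ r ∈ y.support, g r * (((Finsupp.single a n + y) r : ℕ) : ℝ)
        = g r * (y r : ℝ) := by
      intro r hr
      have hne : r ≠ a := by rintro rfl; exact ha hr
      simp [Finsupp.single_apply, Ne.symm hne]
    rw [Finset.sum_congr rfl h1]
    have h2 : ((Finsupp.single a n + y) a : ℕ) = n := by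
      simp [Finsupp.notMem_support_iff.mp ha]
    rw [h2]
    rw [Multiset.map_nsmul, Multiset.map_singleton, Multiset.sum_nsmul, Multiset.sum_singleton,
      nsmul_eq_mul, mul_comm]
    try ring

lemma sum_toMultiset (y : ℝ →₀ ℕ) :
    (Finsupp.toMultiset y).sum = ∑ r ∈ y.support, r * (y r : ℝ) := by
  have := wm_toMultiset id y
  simpa [Wm] using this

lemma feas_iff (f : ℝ) (y : ℝ →₀ ℕ) :
    Feasible f y ↔ FeasM f (Finsupp.toMultiset y) := by
  unfold Feasible FeasM
  rw [sum_toMultiset]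

lemma valid_iff (f : ℝ) (π : ℝ → ℝ) : Valid f π ↔ ValidM f π := by
  classical
  unfold Valid ValidM
  constructor
  · rintro ⟨h0, h1⟩
    refine ⟨h0, fun M hM => ?_⟩
    obtain ⟨y, rfl⟩ : ∃ y : ℝ →₀ ℕ, Finsupp.toMultiset y = M :=
      ⟨M.toFinsupp, Multiset.toFinsupp_toMultiset M⟩
    rw [wm_toMultiset]
    exact h1 y ((feas_iff f y).2 hM)
  · rintro ⟨h0, h1⟩
    refine ⟨h0, fun y hy => ?_⟩
    have := h1 (Finsupp.toMultiset y) ((feas_iff f y).1 hy)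
    rwa [wm_toMultiset] at this

lemma Wm_add (g : ℝ → ℝ) (M N : Multiset ℝ) : Wm g (M + N) = Wm g M + Wm g N := by
  simp [Wm]

lemma Wm_nonneg {g : ℝ → ℝ} (hg : ∀ x, 0 ≤ g x) (M : Multiset ℝ) : 0 ≤ Wm g M := by
  refine Multiset.sum_nonneg ?_
  intro x hx
  obtain ⟨a, _, rfl⟩ := Multiset.mem_map.1 hx
  exact hg a

lemma Wm_congr {g g' : ℝ → ℝ} {M : Multiset ℝ} (h : ∀ a ∈ M, g a = g' a) :
    Wm g M = Wm g' M := by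
  rw [Wm, Wm, Multiset.map_congr rfl h]

lemma Wm_le {g g' : ℝ → ℝ} {M : Multiset ℝ} (h : ∀ a ∈ M, g a ≤ g' a) :
    Wm g M ≤ Wm g' M :=
  Multiset.sum_map_le_sum_map _ _ h

lemma Wm_replicate (g : ℝ → ℝ) (k : ℕ) (a : ℝ) :
    Wm g (Multiset.replicate k a) = k * g a := by
  simp [Wm, Multiset.map_replicate, Multiset.sum_replicate]

lemma Wm_cons (g : ℝ → ℝ) (a : ℝ) (M : Multiset ℝ) :
    Wm g (a ::ₘ M) = g a + Wm g M := by simp [Wm]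

lemma Wm_pair (g : ℝ → ℝ) (a b : ℝ) : Wm g {a, b} = g a + g b := by
  simp [Wm]

lemma Wm_split (g : ℝ → ℝ) (M : Multiset ℝ) (a : ℝ) :
    Wm g M = (M.count a : ℝ) * g a + Wm g (M.filter (· ≠ a)) := by
  classical
  conv_lhs => rw [← Multiset.filter_add_not (· = a) M]
  rw [Wm_add, Multiset.filter_eq', Wm_replicate]

lemma sum_split (M : Multiset ℝ) (a : ℝ) :
    M.sum = (M.count a : ℝ) * a + (M.filter (· ≠ a)).sum := by
  classical
  have := Wm_split id M a
  simpa [Wm] using this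

section MinProps

variable {f : ℝ} {m : ℝ → ℝ}
variable (hval : ValidM f m)
variable (hmin : ∀ g : ℝ → ℝ, ValidM f g → (∀ x, g x ≤ m x) → g = m)

lemma sum_map_shift (φ : ℝ → ℝ) (hφ : ∀ r, ∃ z : ℤ, φ r - r = (z : ℝ)) (M : Multiset ℝ) :
    ∃ z : ℤ, (M.map φ).sum - M.sum = (z : ℝ) := by
  induction M using Multiset.induction_on with
  | empty => exact ⟨0, by simp⟩
  | cons a M ih =>
    obtain ⟨z, hz⟩ := ih
    obtain ⟨w, hw⟩ := hφ a
    refine ⟨w + z, ?_⟩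
    push_cast
    simp only [Multiset.map_cons, Multiset.sum_cons]
    linarith

include hval in
lemma valid_of_shift (g : ℝ → ℝ)
    (h : ∀ x, ∃ x', (∃ z : ℤ, x' - x = (z : ℝ)) ∧ g x = m x') : ValidM f g := by
  have hφ : ∀ x, ∃ z : ℤ, (fun x => (h x).choose) x - x = (z : ℝ) := fun x => (h x).choose_spec.1
  have hg : ∀ x, g x = m ((h x).choose) := fun x => (h x).choose_spec.2
  constructor
  · intro x; rw [hg x]; exact hval.1 _
  · intro M ⟨z, hz⟩
    obtain ⟨w, hw⟩ := sum_map_shift (fun x => (h x).choose) hφ M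
    have hfeas : FeasM f (M.map fun x => (h x).choose) := ⟨w + z, by push_cast; linarith⟩
    have := hval.2 _ hfeas
    calc 1 ≤ Wm m (M.map fun x => (h x).choose) := this
    _ = Wm g M := by
        rw [Wm, Wm, Multiset.map_map]
        exact congrArg Multiset.sum (Multiset.map_congr rfl fun a _ => (hg a).symm)

include hval hmin in
lemma m_zero : m 0 = 0 := by
  classical
  set g : ℝ → ℝ := fun x => if x = 0 then 0 else m x with hgdef
  have hgle : ∀ x, g x ≤ m x := by
    intro x; by_cases hx : x = 0 <;> simp [hgdef, hx, hval.1 0, le_refl]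
  have hgvalid : ValidM f g := by
    constructor
    · intro x; by_cases hx : x = 0 <;> simp [hgdef, hx, hval.1 x]
    · intro M ⟨z, hz⟩
      have hsum : (M.filter (· ≠ (0:ℝ))).sum = M.sum := by
        have := sum_split M 0
        simpa using this.symm
      have hfeas : FeasM f (M.filter (· ≠ (0:ℝ))) := ⟨z, by rw [hsum]; exact hz⟩
      have h1 := hval.2 _ hfeas
      have h2 : Wm g M = Wm m (M.filter (· ≠ (0:ℝ))) := by
        rw [Wm_split g M 0]
        have : g 0 = 0 := by simp [hgdef]
        rw [this, mul_zero, zero_add]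
        refine Wm_congr ?_
        intro a ha
        have := Multiset.of_mem_filter ha
        simp only [hgdef]
        rw [if_neg this]
      rw [h2]; exact h1
  have := hmin g hgvalid hgle
  have h0 := congrFun this 0
  simp [hgdef] at h0
  exact h0.symm

include hval hmin in
lemma m_per : ∀ x, m (x + 1) = m x := by
  have h1 : ∀ x, m x ≤ m (x + 1) := by
    intro x
    set g : ℝ → ℝ := fun x => min (m x) (m (x + 1)) with hgdef
    have : ValidM f g := by
      refine valid_of_shift hval g ?_
      intro x
      by_cases hx : m (x + 1) < m x
      · exact ⟨x + 1, ⟨1, by push_cast; ring⟩, by simp [hgdef, min_eq_right hx.le]⟩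
      · exact ⟨x, ⟨0, by push_cast; ring⟩, by simp [hgdef, min_eq_left (not_lt.1 hx)]⟩
    have := hmin g this (fun x => min_le_left _ _)
    have hx := congrFun this x
    simp only [hgdef] at hx
    exact min_eq_left_iff.mp hx
  have h2 : ∀ x, m x ≤ m (x - 1) := by
    intro x
    set g : ℝ → ℝ := fun x => min (m x) (m (x - 1)) with hgdef
    have : ValidM f g := by
      refine valid_of_shift hval g ?_
      intro x
      by_cases hx : m (x - 1) < m x
      · exact ⟨x - 1, ⟨-1, by push_cast; ring⟩, by simp [hgdef, min_eq_right hx.le]⟩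
      · exact ⟨x, ⟨0, by push_cast; ring⟩, by simp [hgdef, min_eq_left (not_lt.1 hx)]⟩
    have := hmin g this (fun x => min_le_left _ _)
    have hx := congrFun this x
    simp only [hgdef] at hx
    exact min_eq_left_iff.mp hx
  intro x
  refine le_antisymm ?_ (h1 x)
  have := h2 (x + 1)
  simpa using this

include hval hmin in
lemma m_congr_mod {x x' : ℝ} (h : ∃ z : ℤ, x' - x = (z : ℝ)) : m x' = m x := by
  obtain ⟨z, hz⟩ := h
  have hper : Function.Periodic m 1 := m_per hval hmin
  have := (hper.int_mul z) x
  have hx' : x' = x + z * 1 := by push_cast; linarith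
  rw [hx']
  exact this

include hval hmin in
lemma m_subadd : ∀ s t : ℝ, m (s + t) ≤ m s + m t := by
  intro s t
  by_contra hlt
  push_neg at hlt
  classical
  set c := s + t with hc
  set g : ℝ → ℝ := fun x => if x = c then m s + m t else m x with hgdef
  have hgle : ∀ x, g x ≤ m x := by
    intro x
    by_cases hx : x = c
    · simp only [hgdef, if_pos hx, hx]; exact hlt.le
    · simp [hgdef, hx, le_refl]
  have hgvalid : ValidM f g := by
    constructor
    · intro x
      by_cases hx : x = c
      · simp only [hgdef, if_pos hx]; exact add_nonneg (hval.1 s) (hval.1 t)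
      · simp [hgdef, hx, hval.1 x]
    · intro M ⟨z, hz⟩
      set k := M.count c with hk
      set Mr := M.filter (· ≠ c) with hMr
      set M' := Mr + Multiset.replicate k s + Multiset.replicate k t with hM'
      have hsum : M'.sum = M.sum := by
        simp only [hM', Multiset.sum_add, Multiset.sum_replicate]
        have := sum_split M c
        rw [this]
        simp [nsmul_eq_mul, hc]
        ring
      have hfeas : FeasM f M' := ⟨z, by rw [hsum]; exact hz⟩
      have h1 := hval.2 _ hfeas
      have h2 : Wm g M = Wm m M' := by
        rw [Wm_split g M c, hM', Wm_add, Wm_add, Wm_replicate, Wm_replicate]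
        have hgc : g c = m s + m t := by simp [hgdef]
        have hcongr : Wm g Mr = Wm m Mr := by
          refine Wm_congr ?_
          intro a ha
          have := Multiset.of_mem_filter ha
          simp only [hgdef]; rw [if_neg this]
        rw [hgc, hcongr]; ring
      rw [h2]; exact h1
  have := hmin g hgvalid hgle
  have h0 := congrFun this c
  simp only [hgdef, if_pos rfl] at h0
  linarith

include hval hmin in
lemma m_le_one : ∀ x, m x ≤ 1 := by
  intro x
  set g : ℝ → ℝ := fun x => min (m x) 1 with hgdef
  have hgvalid : ValidM f g := by
    constructor
    · intro x; exact le_min (hval.1 x) zero_le_one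
    · intro M hM
      by_cases hc : ∀ a ∈ M, m a ≤ 1
      · have : Wm g M = Wm m M := Wm_congr fun a ha => by simp [hgdef, min_eq_left (hc a ha)]
        rw [this]; exact hval.2 M hM
      · push_neg at hc
        obtain ⟨a, haM, ha⟩ := hc
        have hga : g a = 1 := by simp [hgdef, min_eq_right ha.le]
        have hmem : g a ∈ M.map g := Multiset.mem_map_of_mem g haM
        have := Multiset.single_le_sum (s := M.map g) ?_ _ hmem
        · rw [hga] at this; exact this
        · intro y hy
          obtain ⟨b, _, rfl⟩ := Multiset.mem_map.1 hy
          exact le_min (hval.1 b) zero_le_one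
  have := hmin g hgvalid (fun x => min_le_left _ _)
  have hx := congrFun this x
  simp only [hgdef] at hx
  rw [← hx]
  exact min_le_right _ _

include hval hmin in
lemma m_sum_le (M : Multiset ℝ) : m M.sum ≤ Wm m M := by
  induction M using Multiset.induction_on with
  | empty => simp [Wm, m_zero hval hmin]
  | cons a M ih =>
    rw [Multiset.sum_cons, Wm_cons]
    calc m (a + M.sum) ≤ m a + m M.sum := m_subadd hval hmin a M.sum
    _ ≤ m a + Wm m M := by linarith

include hval hmin in
lemma m_sym (a : ℝ) : m a + m (f - a) = 1 := by
  set b := f - a with hb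
  set u := m a with hu
  set v := m b with hv
  have hpair : FeasM f ({a, b} : Multiset ℝ) := ⟨0, by simp [hb]⟩
  have hge : 1 ≤ u + v := by
    have := hval.2 _ hpair
    rwa [Wm_pair] at this
  refine le_antisymm ?_ hge
  rcases eq_or_lt_of_le (hval.1 a) with hu0 | hu0
  · have h1 : v ≤ 1 := m_le_one hval hmin b
    have h2 : u = 0 := by rw [hu, ← hu0]
    linarith
  · have hupos : 0 < u := by rw [hu]; exact hu0
    have key : ∀ δ : ℝ, 0 < δ → δ ≤ u / 2 → v ≤ 1 - u + (2 / u) * δ := by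
      intro δ hδ hδu
      classical
      set g : ℝ → ℝ := fun x => if x = a then u - δ else m x with hgdef
      have hgle : ∀ x, g x ≤ m x := by
        intro x
        simp only [hgdef]
        by_cases hx : x = a
        · rw [if_pos hx, hx, ← hu]; linarith
        · rw [if_neg hx]
      have hgne : g ≠ m := by
        intro h
        have := congrFun h a
        simp only [hgdef, if_pos rfl] at this
        rw [← hu] at this
        linarith
      have hnotvalid : ¬ ValidM f g := fun h => hgne (hmin g h hgle)
      have hgnn : ∀ x, 0 ≤ g x := by
        intro x
        simp only [hgdef]
        by_cases hx : x = a
        · rw [if_pos hx]; linarith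
        · rw [if_neg hx]; exact hval.1 x
      rw [ValidM] at hnotvalid
      push_neg at hnotvalid
      obtain ⟨M, hMfeas, hMlt⟩ := hnotvalid hgnn
      set k := M.count a with hk
      set Mr := M.filter (· ≠ a) with hMr
      have hWg : Wm g M = (k : ℝ) * (u - δ) + Wm m Mr := by
        rw [Wm_split g M a]
        congr 1
        · congr 1; simp [hgdef]
        · refine Wm_congr ?_
          intro x hx
          have := Multiset.of_mem_filter hx
          simp only [hgdef]; rw [if_neg this]
      have hWm : Wm m M = (k : ℝ) * u + Wm m Mr := by rw [Wm_split m M a, ← hu]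
      have hMge : 1 ≤ Wm m M := hval.2 M hMfeas
      have hk1 : 1 ≤ k := by
        by_contra hk0
        push_neg at hk0
        interval_cases k
        · rw [hWg] at hMlt
          rw [hWm] at hMge
          push_cast at hMlt hMge
          linarith
      have hMlt' : Wm m M < 1 + k * δ := by
        rw [hWm]; rw [hWg] at hMlt
        push_cast
        nlinarith [hMlt]
      have hMrnn : 0 ≤ Wm m Mr := Wm_nonneg hval.1 Mr
      have hku : (k : ℝ) * u ≤ Wm m M := by rw [hWm]; linarith
      have hkbound : (k : ℝ) ≤ 2 / u := by
        have h1 : (k : ℝ) * (u - δ) < 1 := by nlinarith [hMlt', hku]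
        have h2 : u / 2 ≤ u - δ := by linarith
        have h3 : (k : ℝ) * (u / 2) < 1 := by
          have hknn : (0:ℝ) ≤ k := Nat.cast_nonneg k
          nlinarith
        rw [le_div_iff₀ hupos]
        nlinarith
      have haM : a ∈ M := by
        rw [← Multiset.count_pos, ← hk]; omega
      set M₁ := M.erase a with hM₁
      have hMcons : M = a ::ₘ M₁ := (Multiset.cons_erase haM).symm
      have hWsplit : Wm m M = u + Wm m M₁ := by
        conv_lhs => rw [hMcons]
        rw [Wm_cons, ← hu]
      obtain ⟨z, hz⟩ := hMfeas
      have hM₁sum : M₁.sum = M.sum - a := by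
        conv_rhs => rw [hMcons]
        rw [Multiset.sum_cons]; ring
      have hbz : ∃ w : ℤ, M₁.sum - b = (w : ℝ) := by
        refine ⟨z, ?_⟩
        rw [hM₁sum, hb]
        linarith
      have hv1 : v = m M₁.sum := by
        rw [hv]
        exact (m_congr_mod hval hmin hbz).symm
      have hv2 : v ≤ Wm m M₁ := by rw [hv1]; exact m_sum_le hval hmin M₁
      have : v ≤ Wm m M - u := by rw [hWsplit]; linarith
      have hkδ : (k : ℝ) * δ ≤ (2 / u) * δ :=
        mul_le_mul_of_nonneg_right hkbound hδ.le
      linarith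
    by_contra hcon
    push_neg at hcon
    have hvu : 1 - u < v := by linarith
    set ε := v - (1 - u) with hε
    have hεpos : 0 < ε := by linarith
    set δ := min (u / 2) (ε * u / 4) with hδdef
    have hδpos : 0 < δ := lt_min (by linarith) (by nlinarith [mul_pos hεpos hupos])
    have hδle : δ ≤ u / 2 := min_le_left _ _
    have := key δ hδpos hδle
    have hδ2 : (2 / u) * δ ≤ ε / 2 := by
      have hδr : δ ≤ ε * u / 4 := min_le_right _ _
      rw [div_mul_eq_mul_div, div_le_div_iff₀ hupos (by norm_num)]
      nlinarith
    linarith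

end MinProps

lemma chain_min {c : Set (ℝ → ℝ)}
    (hc : ∀ g ∈ c, ∀ h ∈ c, (∀ x, g x ≤ h x) ∨ (∀ x, h x ≤ g x))
    {g₀ : ℝ → ℝ} (hg₀ : g₀ ∈ c) (t : Finset ℝ) (sel : ℝ → (ℝ → ℝ))
    (hsel : ∀ a ∈ t, sel a ∈ c) :
    ∃ g ∈ c, ∀ a ∈ t, ∀ x, g x ≤ sel a x := by
  classical
  induction t using Finset.induction_on with
  | empty => exact ⟨g₀, hg₀, by simp⟩
  | @insert b t hbt ih =>
    obtain ⟨g, hgc, hg⟩ := ih fun a hat => hsel a (Finset.mem_insert_of_mem hat)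
    have hbc : sel b ∈ c := hsel b (Finset.mem_insert_self b t)
    rcases hc g hgc (sel b) hbc with h | h
    · refine ⟨g, hgc, ?_⟩
      intro a hat x
      rcases Finset.mem_insert.1 hat with rfl | hat
      · exact h x
      · exact hg a hat x
    · refine ⟨sel b, hbc, ?_⟩
      intro a hat x
      rcases Finset.mem_insert.1 hat with rfl | hat
      · exact le_rfl
      · exact (h x).trans (hg a hat x)

lemma exists_minimal (f : ℝ) (π' : ℝ → ℝ) (hπ' : ValidM f π') :
    ∃ m : ℝ → ℝ, ValidM f m ∧ (∀ x, m x ≤ π' x) ∧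
      ∀ g : ℝ → ℝ, ValidM f g → (∀ x, g x ≤ m x) → g = m := by
  classical
  set s : Set ((ℝ → ℝ)ᵒᵈ) :=
    {g | ValidM f (OrderDual.ofDual g) ∧ ∀ x, OrderDual.ofDual g x ≤ π' x} with hs
  have hzorn := zorn_le_nonempty₀ s ?_ (OrderDual.toDual π') ⟨hπ', fun x => le_rfl⟩
  · obtain ⟨mo, _, hmem, hmax⟩ := hzorn
    set m : ℝ → ℝ := OrderDual.ofDual mo with hm
    refine ⟨m, hmem.1, hmem.2, ?_⟩
    intro g hgval hgle
    have hgs : OrderDual.toDual g ∈ s := ⟨hgval, fun x => (hgle x).trans (hmem.2 x)⟩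
    have hle : mo ≤ OrderDual.toDual g := by
      intro x
      exact hgle x
    have := hmax hgs hle
    exact le_antisymm hgle this
  · rintro c hcs hchain y hyc
    set lb : ℝ → ℝ := fun x => sInf ((fun g : (ℝ → ℝ)ᵒᵈ => OrderDual.ofDual g x) '' c) with hlb
    have hcne : ∀ x : ℝ, ((fun g : (ℝ → ℝ)ᵒᵈ => OrderDual.ofDual g x) '' c).Nonempty :=
      fun x => ⟨OrderDual.ofDual y x, ⟨y, hyc, rfl⟩⟩
    have hbdd : ∀ x : ℝ, BddBelow ((fun g : (ℝ → ℝ)ᵒᵈ => OrderDual.ofDual g x) '' c) := by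
      intro x
      refine ⟨0, ?_⟩
      rintro r ⟨g, hg, rfl⟩
      exact (hcs hg).1.1 x
    have hlb_le : ∀ g ∈ c, ∀ x, lb x ≤ OrderDual.ofDual g x :=
      fun g hg x => csInf_le (hbdd x) ⟨g, hg, rfl⟩
    have hlb_nn : ∀ x, 0 ≤ lb x := by
      intro x
      refine le_csInf (hcne x) ?_
      rintro r ⟨g, hg, rfl⟩
      exact (hcs hg).1.1 x
    have hchain' : ∀ g ∈ c, ∀ h ∈ c,
        (∀ x, OrderDual.ofDual g x ≤ OrderDual.ofDual h x) ∨
        (∀ x, OrderDual.ofDual h x ≤ OrderDual.ofDual g x) := by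
      intro g hg h hh
      rcases eq_or_ne g h with rfl | hne
      · exact Or.inl fun x => le_rfl
      · rcases hchain hg hh hne with h1 | h1
        · exact Or.inr fun x => h1 x
        · exact Or.inl fun x => h1 x
    have hvalid : ValidM f lb := by
      refine ⟨hlb_nn, ?_⟩
      intro M hM
      refine le_of_forall_pos_le_add ?_
      intro ε hε
      have hε' : 0 < ε / (M.card + 1) := by positivity
      have hsel : ∀ a : ℝ, ∃ g ∈ c, OrderDual.ofDual g a < lb a + ε / (M.card + 1) := by
        intro a
        obtain ⟨r, ⟨g, hg, rfl⟩, hr⟩ := Real.lt_sInf_add_pos (hcne a) hε'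
        exact ⟨g, hg, hr⟩
      set sel : ℝ → (ℝ → ℝ)ᵒᵈ := fun a => (hsel a).choose with hseldef
      have hselc : ∀ a, sel a ∈ c := fun a => (hsel a).choose_spec.1
      have hselval : ∀ a, OrderDual.ofDual (sel a) a < lb a + ε / (M.card + 1) :=
        fun a => (hsel a).choose_spec.2
      obtain ⟨g, hgc, hgsel⟩ := chain_min hchain' hyc M.toFinset
        (fun a => OrderDual.ofDual (sel a)) (fun a _ => hselc a)
      have h1 : 1 ≤ Wm (OrderDual.ofDual g) M := (hcs hgc).1.2 M hM
      have h2 : Wm (OrderDual.ofDual g) M ≤ Wm (fun a => lb a + ε / (M.card + 1)) M := by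
        refine Wm_le ?_
        intro a haM
        have := hgsel a (Multiset.mem_toFinset.2 haM) a
        exact this.trans (hselval a).le
      have h3 : Wm (fun a => lb a + ε / (M.card + 1)) M
          = Wm lb M + (M.card : ℝ) * (ε / (M.card + 1)) := by
        rw [Wm, Wm]
        rw [show (fun a => lb a + ε / (M.card + 1))
          = (fun a => lb a + (fun _ : ℝ => ε / (M.card + 1)) a) from rfl]
        rw [Multiset.sum_map_add]
        congr 1
        rw [Multiset.map_const', Multiset.sum_replicate, nsmul_eq_mul]
      have h4 : (M.card : ℝ) * (ε / (M.card + 1)) ≤ ε := by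
        rw [mul_div_assoc']
        rw [div_le_iff₀ (by positivity)]
        nlinarith [Nat.cast_nonneg (α := ℝ) M.card, hε]
      linarith
    refine ⟨OrderDual.toDual lb, ⟨hvalid, fun x => (hlb_le y hyc x).trans ((hcs hyc).2 x)⟩, ?_⟩
    intro g hg
    intro x
    exact hlb_le g hg x

end Stmt4Aux

theorem stmt4 (f : ℝ) (hf : f ∈ Set.Ioo (0 : ℝ) 1) (π : ℝ → ℝ)
    (hπ : Valid f π) (hwf : IsWeakFacet f π) :
    MinimalValid f π := by
  classical
  open Stmt4Aux in
  refine ⟨hπ, ?_⟩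
  rintro ⟨π', hπ'v, hle, hne⟩
  obtain ⟨x₀, hx₀⟩ : ∃ x, π' x ≠ π x := by
    by_contra h
    push_neg at h
    exact hne (funext h)
  have hx₀lt : π' x₀ < π x₀ := lt_of_le_of_ne (hle x₀) hx₀
  have hπ'M : ValidM f π' := (valid_iff f π').1 hπ'v
  obtain ⟨m, hmval, hmle, hmmin⟩ := exists_minimal f π' hπ'M
  have hmleπ : ∀ x, m x ≤ π x := fun x => (hmle x).trans (hle x)
  have hmv : Valid f m := (valid_iff f m).2 hmval
  have hsub : Pset f π ⊆ Pset f m := by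
    rintro y ⟨hyF, hy1⟩
    refine ⟨hyF, le_antisymm ?_ ?_⟩
    · rw [← hy1]
      exact Finset.sum_le_sum fun r _ =>
        mul_le_mul_of_nonneg_right (hmleπ r) (Nat.cast_nonneg _)
    · exact hmv.2 y hyF
  have hPeq := hwf.2 m hmv hsub
  have hsym := m_sym hmval hmmin x₀
  set y₀ : ℝ →₀ ℕ := Multiset.toFinsupp ({x₀, f - x₀} : Multiset ℝ) with hy₀
  have hyM : Finsupp.toMultiset y₀ = ({x₀, f - x₀} : Multiset ℝ) :=
    Multiset.toFinsupp_toMultiset _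
  have hyF : Feasible f y₀ := by
    rw [feas_iff, hyM]
    exact ⟨0, by simp⟩
  have hyP : y₀ ∈ Pset f m := by
    refine ⟨hyF, ?_⟩
    rw [← wm_toMultiset m y₀, hyM, Wm_pair]
    exact hsym
  rw [← hPeq] at hyP
  obtain ⟨-, hπ1⟩ := hyP
  rw [← wm_toMultiset π y₀, hyM, Wm_pair] at hπ1
  have hπa : m x₀ < π x₀ := lt_of_le_of_lt (hmle x₀) hx₀lt
  have hπb : m (f - x₀) ≤ π (f - x₀) := hmleπ _
  linarith
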